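/- Let $V$ be an $n$-set with partitions $X_1, X_2$ of $\binom{V}{r}$ and $Y_1, Y_2$ of $\binom{V}{r'}$ as above, and fix a vertex $v_0 \in V$. Then for any distinct $v, v' \in V \setminus \{v_0\}$: $|D(v,v')| \le |D(v,v_0)| + |D(v',v_0)| + \binom{n-1}{r-2}$, where $D$ is defined via the coloring $\phi$ of $r$-sets. -/

import Mathlib

/-- Given a 2-coloring `X₁, X₂` of the `r`-subsets of an `n`-set and a fixed vertex
`v₀`, for any distinct `v, v' ∈ V \ {v₀}` we have
`|D(v,v')| ≤ |D(v,v₀)| + |D(v',v₀)| + C(n-1, r-2)`, where `D(u,w)` is the family of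
`(r+1)`-sets `S ∋ u, w` such that `S - u` and `S - w` receive different colors. -/
theorem stmt19 {V : Type*} [Fintype V] [DecidableEq V] (n r : ℕ)
    (hn : Fintype.card V = n) (hr : 1 ≤ r)
    (X1 X2 : Finset (Finset V)) (hX : X1 ∪ X2 = Finset.univ.powersetCard r)
    (hXd : Disjoint X1 X2)
    (v₀ v v' : V) (h1 : v ≠ v') (h2 : v ≠ v₀) (h3 : v' ≠ v₀) :
    ((Finset.univ.powersetCard (r + 1)).filter (fun S =>
        v ∈ S ∧ v' ∈ S ∧ ¬ ((S.erase v ∈ X1) ↔ (S.erase v' ∈ X1)))).card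
      ≤ ((Finset.univ.powersetCard (r + 1)).filter (fun S =>
          v ∈ S ∧ v₀ ∈ S ∧ ¬ ((S.erase v ∈ X1) ↔ (S.erase v₀ ∈ X1)))).card
        + ((Finset.univ.powersetCard (r + 1)).filter (fun S =>
          v' ∈ S ∧ v₀ ∈ S ∧ ¬ ((S.erase v' ∈ X1) ↔ (S.erase v₀ ∈ X1)))).card
        + (n - 1).choose (r - 2) := by
  classical
  set A := ((Finset.univ.powersetCard (r + 1)).filter (fun S =>
        v ∈ S ∧ v' ∈ S ∧ ¬ ((S.erase v ∈ X1) ↔ (S.erase v' ∈ X1)))) with hA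
  set B1 := ((Finset.univ.powersetCard (r + 1)).filter (fun S =>
          v ∈ S ∧ v₀ ∈ S ∧ ¬ ((S.erase v ∈ X1) ↔ (S.erase v₀ ∈ X1)))) with hB1
  set B2 := ((Finset.univ.powersetCard (r + 1)).filter (fun S =>
          v' ∈ S ∧ v₀ ∈ S ∧ ¬ ((S.erase v' ∈ X1) ↔ (S.erase v₀ ∈ X1)))) with hB2
  suffices h : A.card ≤ (B1 ∪ B2).card by
    calc A.card ≤ (B1 ∪ B2).card := h
      _ ≤ B1.card + B2.card := Finset.card_union_le _ _
      _ ≤ B1.card + B2.card + (n-1).choose (r-2) := Nat.le_add_right _ _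
  set f : Finset V → Finset V := fun S =>
    if v₀ ∈ S then S
    else if ¬ ((insert v₀ ((S.erase v').erase v) ∈ X1) ↔ (S.erase v' ∈ X1)) then
      insert v₀ (S.erase v')
    else insert v₀ (S.erase v) with hf
  apply Finset.card_le_card_of_injOn f
  · intro S hS
    simp only [hA, Finset.mem_filter, Finset.mem_powersetCard_univ, Finset.mem_coe] at hS
    obtain ⟨hcard, hv, hv', hcol⟩ := hS
    simp only [Finset.mem_coe, Finset.mem_union, hB1, hB2, Finset.mem_filter,
      Finset.mem_powersetCard_univ, hf]
    by_cases h0 : v₀ ∈ S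
    · rw [if_pos h0]
      by_cases hd : (S.erase v ∈ X1) ↔ (S.erase v₀ ∈ X1)
      · refine Or.inr ⟨hcard, hv', h0, fun hiff => hcol ?_⟩
        exact Iff.trans hd hiff.symm
      · exact Or.inl ⟨hcard, hv, h0, hd⟩
    · rw [if_neg h0]
      have hcard' : ∀ w ∈ S, (insert v₀ (S.erase w)).card = r + 1 := by
        intro w hw
        rw [Finset.card_insert_of_notMem (fun hm => h0 (Finset.mem_of_mem_erase hm)),
          Finset.card_erase_of_mem hw, hcard]
        omega
      have hee : (S.erase v').erase v = (S.erase v).erase v' :=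
        Finset.erase_right_comm
      by_cases hd : ¬ ((insert v₀ ((S.erase v').erase v) ∈ X1) ↔ (S.erase v' ∈ X1))
      · rw [if_pos hd]
        refine Or.inl ⟨hcard' v' hv', Finset.mem_insert_of_mem (Finset.mem_erase.2 ⟨h1, hv⟩),
          Finset.mem_insert_self _ _, ?_⟩
        rw [Finset.erase_insert_of_ne h2.symm, Finset.erase_insert
          (fun hm => h0 (Finset.mem_of_mem_erase hm))]
        exact hd
      · rw [if_neg hd]
        push_neg at hd
        refine Or.inr ⟨hcard' v hv, Finset.mem_insert_of_mem (Finset.mem_erase.2 ⟨h1.symm, hv'⟩),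
          Finset.mem_insert_self _ _, ?_⟩
        rw [Finset.erase_insert_of_ne h3.symm, Finset.erase_insert
          (fun hm => h0 (Finset.mem_of_mem_erase hm)), ← hee]
        tauto
  · intro S hS T hT hST
    simp only [hA, Finset.mem_filter, Finset.mem_powersetCard_univ, Finset.mem_coe] at hS hT
    obtain ⟨hScard, hSv, hSv', hScol⟩ := hS
    obtain ⟨hTcard, hTv, hTv', hTcol⟩ := hT
    simp only [hf] at hST
    have recov : ∀ (U : Finset V) (w : V), w ∈ U → v₀ ∉ U →
        insert w ((insert v₀ (U.erase w)).erase v₀) = U := by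
      intro U w hw h0
      rw [Finset.erase_insert (fun hm => h0 (Finset.mem_of_mem_erase hm)),
        Finset.insert_erase hw]
    by_cases hS0 : v₀ ∈ S <;> by_cases hT0 : v₀ ∈ T
    · rwa [if_pos hS0, if_pos hT0] at hST
    · rw [if_pos hS0, if_neg hT0] at hST
      exfalso
      by_cases hd : ¬ ((insert v₀ ((T.erase v').erase v) ∈ X1) ↔ (T.erase v' ∈ X1))
      · rw [if_pos hd] at hST
        have : v' ∈ insert v₀ (T.erase v') := hST ▸ hSv'
        simp [h3] at this
      · rw [if_neg hd] at hST
        have : v ∈ insert v₀ (T.erase v) := hST ▸ hSv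
        simp [h2] at this
    · rw [if_neg hS0, if_pos hT0] at hST
      exfalso
      by_cases hd : ¬ ((insert v₀ ((S.erase v').erase v) ∈ X1) ↔ (S.erase v' ∈ X1))
      · rw [if_pos hd] at hST
        have : v' ∈ insert v₀ (S.erase v') := hST ▸ hTv'
        simp [h3] at this
      · rw [if_neg hd] at hST
        have : v ∈ insert v₀ (S.erase v) := hST ▸ hTv
        simp [h2] at this
    · rw [if_neg hS0, if_neg hT0] at hST
      by_cases hdS : ¬ ((insert v₀ ((S.erase v').erase v) ∈ X1) ↔ (S.erase v' ∈ X1)) <;>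
        by_cases hdT : ¬ ((insert v₀ ((T.erase v').erase v) ∈ X1) ↔ (T.erase v' ∈ X1))
      · rw [if_pos hdS, if_pos hdT] at hST
        have h' : insert v' ((insert v₀ (S.erase v')).erase v₀)
            = insert v' ((insert v₀ (T.erase v')).erase v₀) := by rw [hST]
        rwa [recov S v' hSv' hS0, recov T v' hTv' hT0] at h'
      · rw [if_pos hdS, if_neg hdT] at hST
        exfalso
        have hvin : v ∈ insert v₀ (S.erase v') :=
          Finset.mem_insert_of_mem (Finset.mem_erase.2 ⟨h1, hSv⟩)
        rw [hST] at hvin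
        simp [h2] at hvin
      · rw [if_neg hdS, if_pos hdT] at hST
        exfalso
        have hvin : v ∈ insert v₀ (T.erase v') :=
          Finset.mem_insert_of_mem (Finset.mem_erase.2 ⟨h1, hTv⟩)
        rw [← hST] at hvin
        simp [h2] at hvin
      · rw [if_neg hdS, if_neg hdT] at hST
        have h' : insert v ((insert v₀ (S.erase v)).erase v₀)
            = insert v ((insert v₀ (T.erase v)).erase v₀) := by rw [hST]
        rwa [recov S v hSv hS0, recov T v hTv hT0] at h'
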